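/- For s ∈ (0,1] and a, b ∈ ℝ with a ≥ |b|, the inequality (1 + u^s)^(1/s)/(1+u) ≥ (1 + v^s)^(1/s)/(1+v) holds, where u = cosh(b·s)^(1/s)/cosh(a·s)^(1/s) and v = cosh(b)/cosh(a). -/

import Mathlib

open Real

private lemma F_hasDeriv (s : ℝ) (hs0 : 0 < s) {x : ℝ} (hx : 0 < x) :
    HasDerivAt (fun y : ℝ => (1 + y ^ s) ^ (1/s) / (1 + y))
      ((1 + x ^ s) ^ (1/s - 1) * (x ^ (s - 1) - 1) / (1 + x) ^ 2) x := by
  have hA : (0:ℝ) < 1 + x ^ s := by positivity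
  have h1 : HasDerivAt (fun y : ℝ => 1 + y ^ s) (s * x ^ (s - 1)) x :=
    (Real.hasDerivAt_rpow_const (Or.inl hx.ne')).const_add 1
  have h3 := h1.rpow_const (p := 1/s) (Or.inl hA.ne')
  have h4 : HasDerivAt (fun y : ℝ => 1 + y) 1 x := (hasDerivAt_id x).const_add 1
  have hx1 : (1 : ℝ) + x ≠ 0 := by positivity
  have hdiv := h3.div h4 hx1
  refine hdiv.congr_deriv ?_
  have e1 : (1 + x ^ s) ^ (1/s) = (1 + x ^ s) ^ (1/s - 1) * (1 + x ^ s) := by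
    rw [← Real.rpow_add_one hA.ne']; ring_nf
  have e2 : x ^ s = x ^ (s - 1) * x := by
    rw [← Real.rpow_add_one hx.ne']; ring_nf
  rw [e1]
  set P := (1 + x ^ s) ^ (1/s - 1) with hP
  rw [e2]
  field_simp
  ring

private lemma F_mono (s : ℝ) (hs0 : 0 < s) (hs1 : s ≤ 1) :
    MonotoneOn (fun y : ℝ => (1 + y ^ s) ^ (1/s) / (1 + y)) (Set.Ioc 0 1) := by
  apply monotoneOn_of_deriv_nonneg (convex_Ioc 0 1)
  · exact fun x hx => ((F_hasDeriv s hs0 hx.1).continuousAt).continuousWithinAt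
  · intro x hx
    rw [interior_Ioc] at hx
    exact ((F_hasDeriv s hs0 hx.1).differentiableAt).differentiableWithinAt
  · intro x hx
    rw [interior_Ioc] at hx
    rw [(F_hasDeriv s hs0 hx.1).deriv]
    have h1 : (1:ℝ) ≤ x ^ (s - 1) :=
      Real.one_le_rpow_of_pos_of_le_one_of_nonpos hx.1 hx.2.le (by linarith)
    have hxs : (0:ℝ) ≤ x ^ s := Real.rpow_nonneg hx.1.le _
    have h2 : (0:ℝ) ≤ (1 + x ^ s) ^ (1/s - 1) := Real.rpow_nonneg (by linarith) _
    have h3 : (0:ℝ) < (1 + x) ^ 2 := by nlinarith [hx.1]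
    exact div_nonneg (mul_nonneg h2 (by linarith)) h3.le

private lemma g_hasDeriv (s : ℝ) (hs0 : 0 < s) (x : ℝ) :
    HasDerivAt (fun y : ℝ => Real.log (Real.cosh y) - Real.log (Real.cosh (y * s)) / s)
      (Real.sinh x / Real.cosh x - Real.sinh (x * s) * s / Real.cosh (x * s) / s) x := by
  have hc : HasDerivAt (fun y : ℝ => Real.log (Real.cosh y)) (Real.sinh x / Real.cosh x) x := by
    have := (Real.hasDerivAt_cosh x).log (Real.cosh_pos _).ne'
    exact this
  have hm : HasDerivAt (fun y : ℝ => Real.cosh (y * s)) (Real.sinh (x * s) * s) x := by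
    have := (Real.hasDerivAt_cosh (x * s)).comp x (hasDerivAt_mul_const s)
    exact this
  have hl : HasDerivAt (fun y : ℝ => Real.log (Real.cosh (y * s)))
      (Real.sinh (x * s) * s / Real.cosh (x * s)) x := hm.log (Real.cosh_pos _).ne'
  exact hc.sub (hl.div_const s)

private lemma g_mono (s : ℝ) (hs0 : 0 < s) (hs1 : s ≤ 1) :
    MonotoneOn (fun y : ℝ => Real.log (Real.cosh y) - Real.log (Real.cosh (y * s)) / s)
      (Set.Ici 0) := by
  apply monotoneOn_of_deriv_nonneg (convex_Ici 0)
  · exact fun x _ => ((g_hasDeriv s hs0 x).continuousAt).continuousWithinAt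
  · exact fun x _ => ((g_hasDeriv s hs0 x).differentiableAt).differentiableWithinAt
  · intro x hx
    rw [interior_Ici] at hx
    rw [(g_hasDeriv s hs0 x).deriv]
    have hx0 : (0:ℝ) < x := hx
    have hcx : (0:ℝ) < Real.cosh x := Real.cosh_pos _
    have hcs : (0:ℝ) < Real.cosh (x * s) := Real.cosh_pos _
    have key : Real.sinh (x * s) * Real.cosh x ≤ Real.sinh x * Real.cosh (x * s) := by
      have h0 : (0:ℝ) ≤ Real.sinh (x - x * s) := by
        rw [← Real.sinh_zero]
        exact Real.sinh_le_sinh.2 (by nlinarith)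
      rw [Real.sinh_sub] at h0
      nlinarith
    have e : Real.sinh (x * s) * s / Real.cosh (x * s) / s = Real.sinh (x * s) / Real.cosh (x * s) := by
      field_simp
    rw [e, sub_nonneg, div_le_div_iff₀ hcs hcx]
    exact key

theorem F_u_ge_F_v (s : ℝ) (hs : s ∈ Set.Ioc (0:ℝ) 1) (a b : ℝ) (hab : |b| ≤ a) :
    (1 + ((Real.cosh (b * s)) ^ (1/s) / (Real.cosh (a * s)) ^ (1/s)) ^ s) ^ (1/s) /
      (1 + (Real.cosh (b * s)) ^ (1/s) / (Real.cosh (a * s)) ^ (1/s)) ≥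
    (1 + (Real.cosh b / Real.cosh a) ^ s) ^ (1/s) / (1 + Real.cosh b / Real.cosh a) := by
  obtain ⟨hs0, hs1⟩ := hs
  have ha0 : 0 ≤ a := (abs_nonneg b).trans hab
  set U : ℝ := (Real.cosh (b * s)) ^ (1/s) / (Real.cosh (a * s)) ^ (1/s) with hUdef
  set V : ℝ := Real.cosh b / Real.cosh a with hVdef
  have hcb : (0:ℝ) < Real.cosh b := Real.cosh_pos _
  have hca : (0:ℝ) < Real.cosh a := Real.cosh_pos _
  have hcbs : (0:ℝ) < Real.cosh (b * s) := Real.cosh_pos _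
  have hcas : (0:ℝ) < Real.cosh (a * s) := Real.cosh_pos _
  have hba : Real.cosh b ≤ Real.cosh a := Real.cosh_le_cosh.2 (by rwa [abs_of_nonneg ha0])
  have hbas : Real.cosh (b * s) ≤ Real.cosh (a * s) := by
    apply Real.cosh_le_cosh.2
    rw [abs_mul, abs_mul, abs_of_nonneg hs0.le, abs_of_nonneg ha0]
    exact mul_le_mul_of_nonneg_right hab hs0.le
  have hU0 : 0 < U := div_pos (Real.rpow_pos_of_pos hcbs _) (Real.rpow_pos_of_pos hcas _)
  have hV0 : 0 < V := div_pos hcb hca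
  have hU1 : U ≤ 1 :=
    div_le_one_of_le₀ (Real.rpow_le_rpow hcbs.le hbas (by positivity))
      (Real.rpow_nonneg hcas.le _)
  have hV1 : V ≤ 1 := div_le_one_of_le₀ hba hca.le
  -- key : V ≤ U
  have hVU : V ≤ U := by
    have hgab := g_mono s hs0 hs1 (Set.mem_Ici.2 (abs_nonneg b)) (Set.mem_Ici.2 ha0) hab
    have hgb : Real.log (Real.cosh b) - Real.log (Real.cosh (b * s)) / s =
        Real.log (Real.cosh |b|) - Real.log (Real.cosh (|b| * s)) / s := by
      rcases abs_cases b with ⟨h, _⟩ | ⟨h, _⟩ <;> rw [h]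
      rw [show -b * s = -(b * s) by ring, Real.cosh_neg, Real.cosh_neg]
    simp only at hgab
    rw [← hgb] at hgab
    have hUe : U = Real.exp (Real.log (Real.cosh (b * s)) * (1/s) -
        Real.log (Real.cosh (a * s)) * (1/s)) := by
      rw [hUdef, Real.exp_sub, ← Real.rpow_def_of_pos hcbs, ← Real.rpow_def_of_pos hcas]
    have hVe : V = Real.exp (Real.log (Real.cosh b) - Real.log (Real.cosh a)) := by
      rw [hVdef, Real.exp_sub, Real.exp_log hcb, Real.exp_log hca]
    rw [hUe, hVe, Real.exp_le_exp]
    have h1 : Real.log (Real.cosh (b * s)) * (1/s) = Real.log (Real.cosh (b * s)) / s := by ring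
    have h2 : Real.log (Real.cosh (a * s)) * (1/s) = Real.log (Real.cosh (a * s)) / s := by ring
    rw [h1, h2]
    linarith
  have := F_mono s hs0 hs1 (Set.mem_Ioc.2 ⟨hV0, hV1⟩) (Set.mem_Ioc.2 ⟨hU0, hU1⟩) hVU
  simpa using this
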